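/- Suppose D^k positive diagonal and B^k nonnegative irreducible for k = 1,2,3, with (D³)⁻¹B³ > (D²)⁻¹B² > (D¹)⁻¹B¹ entrywise, and let x̃³ with 0 ≪ x̃³ ≪ 1 satisfy (−D³ + (I − X̃³)B³)x̃³ = 0. Then there exists no triple (x̄¹, x̄², x̄³) with all 0 ≪ x̄^k ≪ 1 and x̄¹+x̄²+x̄³ ≪ 1 satisfying the three equilibrium equations 0 = (−D^k + (I − X̄¹ − X̄² − X̄³)B^k)x̄^k for k = 1, 2, 3. -/
import Mathlib


open Matrix

/-- A nonnegative matrix is irreducible if for every `(i, j)` some power has a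
strictly positive `(i, j)` entry. -/
def IrredNonneg {n : ℕ} (B : Matrix (Fin n) (Fin n) ℝ) : Prop :=
  (∀ i j, 0 ≤ B i j) ∧ ∀ i j, ∃ k : ℕ, 0 < (B ^ (k + 1)) i j

/-- `A > B` entrywise: `A ≥ B` with at least one strict inequality. -/
def MatGt {n : ℕ} (A B : Matrix (Fin n) (Fin n) ℝ) : Prop :=
  (∀ i j, B i j ≤ A i j) ∧ A ≠ B

/- helper lemmas -/
lemma entry_eq {n : ℕ} (d c v : Fin n → ℝ) (B : Matrix (Fin n) (Fin n) ℝ)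
    (h : (-(Matrix.diagonal d) + Matrix.diagonal c * B) *ᵥ v = 0) (i : Fin n) :
    d i * v i = c i * ∑ j, B i j * v j := by
  have h' := congrFun h i
  simp only [mulVec, dotProduct, Matrix.add_apply, Matrix.neg_apply, Matrix.diagonal_apply,
    Matrix.diagonal_mul, Pi.zero_apply, add_mul, neg_mul, ite_mul, zero_mul,
    Finset.sum_add_distrib, Finset.sum_neg_distrib] at h'
  rw [Finset.sum_ite_eq] at h'
  simp only [Finset.mem_univ, if_true, Finset.mul_sum] at h'
  have h2 : ∑ j, c i * B i j * v j = ∑ j, c i * (B i j * v j) :=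
    Finset.sum_congr rfl fun j _ => mul_assoc _ _ _
  rw [Finset.mul_sum]
  linarith [h', h2]

lemma one_sub_diag {n : ℕ} (x : Fin n → ℝ) :
    (1 : Matrix (Fin n) (Fin n) ℝ) - Matrix.diagonal x = Matrix.diagonal (fun k => 1 - x k) := by
  ext i j; by_cases h : i = j <;> simp [h, Matrix.one_apply, Matrix.sub_apply]

lemma one_sub_diag3 {n : ℕ} (x y z : Fin n → ℝ) :
    (1 : Matrix (Fin n) (Fin n) ℝ) - Matrix.diagonal x - Matrix.diagonal y - Matrix.diagonal z
      = Matrix.diagonal (fun k => 1 - x k - y k - z k) := by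
  ext i j; by_cases h : i = j <;> simp [h, Matrix.one_apply, Matrix.sub_apply]

lemma inv_diag_mul {n : ℕ} (d : Fin n → ℝ) (hd : ∀ i, 0 < d i) (B : Matrix (Fin n) (Fin n) ℝ)
    (i j : Fin n) : ((Matrix.diagonal d)⁻¹ * B) i j = B i j / d i := by
  have hinv : (Matrix.diagonal d)⁻¹ = Matrix.diagonal (fun i => (d i)⁻¹) := by
    apply Matrix.inv_eq_left_inv
    rw [Matrix.diagonal_mul_diagonal]
    convert Matrix.diagonal_one with i
    exact inv_mul_cancel₀ (hd i).ne'
  rw [hinv, Matrix.diagonal_mul, inv_mul_eq_div]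

lemma pow_nn {n : ℕ} {B : Matrix (Fin n) (Fin n) ℝ} (hB : ∀ i j, 0 ≤ B i j) :
    ∀ m i j, 0 ≤ (B ^ m) i j := by
  intro m
  induction m with
  | zero => intro i j; by_cases hij : i = j <;> simp [Matrix.one_apply, hij]
  | succ m ih =>
    intro i j
    rw [pow_succ, Matrix.mul_apply]
    exact Finset.sum_nonneg fun l _ => mul_nonneg (ih i l) (hB l j)

lemma propagate {n : ℕ} {B : Matrix (Fin n) (Fin n) ℝ} (hB : ∀ i j, 0 ≤ B i j)
    {y : Fin n → ℝ}
    (H : ∀ i, y i = 0 → ∀ j, 0 < B i j → y j = 0) :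
    ∀ m i j, y i = 0 → 0 < (B ^ (m + 1)) i j → y j = 0 := by
  intro m
  induction m with
  | zero => intro i j hi hpos; rw [pow_one] at hpos; exact H i hi j hpos
  | succ m ih =>
    intro i j hi hpos
    rw [pow_succ', Matrix.mul_apply] at hpos
    have hex : ∃ l, 0 < B i l * (B ^ (m + 1)) l j := by
      by_contra hc
      push_neg at hc
      have : ∑ l, B i l * (B ^ (m + 1)) l j ≤ 0 := Finset.sum_nonpos fun l _ => hc l
      linarith
    obtain ⟨l, hl⟩ := hex
    have hBl : 0 < B i l := by
      rcases (hB i l).eq_or_lt with h | h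
      · rw [← h, zero_mul] at hl; linarith
      · exact h
    have hPl : 0 < (B ^ (m + 1)) l j := by
      rcases (pow_nn hB (m + 1) l j).eq_or_lt with h | h
      · rw [← h, mul_zero] at hl; linarith
      · exact h
    exact ih l j (H i hi l hBl) hPl


/-- If `(D³)⁻¹B³ > (D²)⁻¹B² > (D¹)⁻¹B¹` entrywise and `x̃³` is the single-virus
endemic equilibrium of virus 3, then no 3-coexistence equilibrium exists. -/
theorem stmt10 (n : ℕ) (d1 d2 d3 : Fin n → ℝ)
    (hd1 : ∀ i, 0 < d1 i) (hd2 : ∀ i, 0 < d2 i) (hd3 : ∀ i, 0 < d3 i)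
    (B1 B2 B3 : Matrix (Fin n) (Fin n) ℝ)
    (hB1 : IrredNonneg B1) (hB2 : IrredNonneg B2) (hB3 : IrredNonneg B3)
    (hlt32 : MatGt ((Matrix.diagonal d3)⁻¹ * B3) ((Matrix.diagonal d2)⁻¹ * B2))
    (hlt21 : MatGt ((Matrix.diagonal d2)⁻¹ * B2) ((Matrix.diagonal d1)⁻¹ * B1))
    (xt3 : Fin n → ℝ) (hxt3 : ∀ i, 0 < xt3 i ∧ xt3 i < 1)
    (heqt : (-(Matrix.diagonal d3) +
      ((1 : Matrix (Fin n) (Fin n) ℝ) - Matrix.diagonal xt3) * B3) *ᵥ xt3 = 0) :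
    ¬ ∃ x1 x2 x3 : Fin n → ℝ,
      (∀ i, 0 < x1 i ∧ x1 i < 1) ∧ (∀ i, 0 < x2 i ∧ x2 i < 1) ∧
      (∀ i, 0 < x3 i ∧ x3 i < 1) ∧ (∀ i, x1 i + x2 i + x3 i < 1) ∧
      (-(Matrix.diagonal d1) +
        ((1 : Matrix (Fin n) (Fin n) ℝ) - Matrix.diagonal x1
          - Matrix.diagonal x2 - Matrix.diagonal x3) * B1) *ᵥ x1 = 0 ∧
      (-(Matrix.diagonal d2) +
        ((1 : Matrix (Fin n) (Fin n) ℝ) - Matrix.diagonal x1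
          - Matrix.diagonal x2 - Matrix.diagonal x3) * B2) *ᵥ x2 = 0 ∧
      (-(Matrix.diagonal d3) +
        ((1 : Matrix (Fin n) (Fin n) ℝ) - Matrix.diagonal x1
          - Matrix.diagonal x2 - Matrix.diagonal x3) * B3) *ᵥ x3 = 0 := by
  rintro ⟨x1, x2, x3, hx1, hx2, hx3, hsum1, he1, he2, he3⟩
  -- trivial case n = 0
  rcases Nat.eq_zero_or_pos n with hn | hn
  · apply hlt32.2
    subst hn
    funext i
    exact i.elim0
  -- setup
  rw [one_sub_diag3] at he1 he2 he3
  rw [one_sub_diag] at heqt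
  set s : Fin n → ℝ := fun i => x1 i + x2 i + x3 i with hs_def
  have sdef : ∀ j, s j = x1 j + x2 j + x3 j := fun j => rfl
  have hspos : ∀ i, 0 < s i := fun i => by
    have := (hx1 i).1; have := (hx2 i).1; have := (hx3 i).1; rw [sdef]; linarith
  have hslt : ∀ i, s i < 1 := fun i => hsum1 i
  have h1s : ∀ i, 0 < 1 - s i := fun i => by linarith [hslt i]
  have h1t : ∀ i, 0 < 1 - xt3 i := fun i => by linarith [(hxt3 i).2]
  -- entrywise normalized equations
  have E1 := entry_eq d1 _ x1 B1 he1
  have E2 := entry_eq d2 _ x2 B2 he2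
  have E3 := entry_eq d3 _ x3 B3 he3
  have Et := entry_eq d3 _ xt3 B3 heqt
  have norm : ∀ (d : Fin n → ℝ), (∀ i, 0 < d i) → ∀ (B : Matrix (Fin n) (Fin n) ℝ)
      (c v : Fin n → ℝ) (i : Fin n), d i * v i = c i * ∑ j, B i j * v j →
      v i = c i * ∑ j, B i j / d i * v j := by
    intro d hd B c v i h
    have hsum : ∑ j, B i j / d i * v j = (∑ j, B i j * v j) / d i := by
      rw [Finset.sum_div]; exact Finset.sum_congr rfl fun j _ => div_mul_eq_mul_div _ _ _
    rw [hsum, ← mul_div_assoc, eq_div_iff (hd i).ne']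
    linarith [h]
  have conv1 : ∀ i, (1 : ℝ) - s i = 1 - x1 i - x2 i - x3 i := fun i => by rw [sdef]; ring
  have N1 : ∀ i, x1 i = (1 - s i) * ∑ j, B1 i j / d1 i * x1 j := fun i => by
    rw [conv1 i]; exact norm d1 hd1 B1 (fun k => 1 - x1 k - x2 k - x3 k) x1 i (E1 i)
  have N2 : ∀ i, x2 i = (1 - s i) * ∑ j, B2 i j / d2 i * x2 j := fun i => by
    rw [conv1 i]; exact norm d2 hd2 B2 (fun k => 1 - x1 k - x2 k - x3 k) x2 i (E2 i)
  have N3 : ∀ i, x3 i = (1 - s i) * ∑ j, B3 i j / d3 i * x3 j := fun i => by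
    rw [conv1 i]; exact norm d3 hd3 B3 (fun k => 1 - x1 k - x2 k - x3 k) x3 i (E3 i)
  have Nt : ∀ i, xt3 i = (1 - xt3 i) * ∑ j, B3 i j / d3 i * xt3 j :=
    fun i => norm d3 hd3 B3 (fun k => 1 - xt3 k) xt3 i (Et i)
  -- entrywise matrix comparisons
  have m32 : ∀ i j, B2 i j / d2 i ≤ B3 i j / d3 i := by
    intro i j
    have := hlt32.1 i j
    rwa [inv_diag_mul d2 hd2, inv_diag_mul d3 hd3] at this
  have m21 : ∀ i j, B1 i j / d1 i ≤ B2 i j / d2 i := by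
    intro i j
    have := hlt21.1 i j
    rwa [inv_diag_mul d1 hd1, inv_diag_mul d2 hd2] at this
  have m31 : ∀ i j, B1 i j / d1 i ≤ B3 i j / d3 i := fun i j => (m21 i j).trans (m32 i j)
  have e3nn : ∀ i j, 0 ≤ B3 i j / d3 i := fun i j => div_nonneg (hB3.1 i j) (hd3 i).le
  -- splitting the sum over s
  have sumsplit : ∀ i, ∑ j, B3 i j / d3 i * s j =
      (∑ j, B3 i j / d3 i * x1 j) + (∑ j, B3 i j / d3 i * x2 j) +
      (∑ j, B3 i j / d3 i * x3 j) := by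
    intro i
    rw [← Finset.sum_add_distrib, ← Finset.sum_add_distrib]
    exact Finset.sum_congr rfl fun j _ => by rw [sdef]; ring
  -- per-virus bound by virus-3 rates
  have T1 : ∀ i, ∑ j, B1 i j / d1 i * x1 j ≤ ∑ j, B3 i j / d3 i * x1 j := fun i =>
    Finset.sum_le_sum fun j _ => mul_le_mul_of_nonneg_right (m31 i j) (hx1 j).1.le
  have T2 : ∀ i, ∑ j, B2 i j / d2 i * x2 j ≤ ∑ j, B3 i j / d3 i * x2 j := fun i =>
    Finset.sum_le_sum fun j _ => mul_le_mul_of_nonneg_right (m32 i j) (hx2 j).1.le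
  -- key inequality : s i ≤ (1 - s i) * ∑ (B3/d3) s
  have key : ∀ i, s i ≤ (1 - s i) * ∑ j, B3 i j / d3 i * s j := by
    intro i
    rw [sumsplit i]
    have hdist : (1 - s i) * ((∑ j, B3 i j / d3 i * x1 j) + (∑ j, B3 i j / d3 i * x2 j) +
        (∑ j, B3 i j / d3 i * x3 j)) = (1 - s i) * (∑ j, B3 i j / d3 i * x1 j) +
        (1 - s i) * (∑ j, B3 i j / d3 i * x2 j) +
        (1 - s i) * (∑ j, B3 i j / d3 i * x3 j) := by ring
    have h1 := mul_le_mul_of_nonneg_left (T1 i) (h1s i).le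
    have h2 := mul_le_mul_of_nonneg_left (T2 i) (h1s i).le
    linarith [N1 i, N2 i, N3 i, h1, h2, hdist, sdef i]
  -- Step A : s ≤ xt3 everywhere
  have hA : ∀ i, s i ≤ xt3 i := by
    by_contra hc
    push_neg at hc
    obtain ⟨iw, hiw⟩ := hc
    obtain ⟨i0, -, hmax⟩ := Finset.exists_max_image Finset.univ (fun i => s i / xt3 i)
      ⟨iw, Finset.mem_univ iw⟩
    set κ := s i0 / xt3 i0 with hκdef
    have hκ : 1 < κ := by
      have h1 : 1 < s iw / xt3 iw := (one_lt_div (hxt3 iw).1).mpr hiw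
      exact h1.trans_le (hmax iw (Finset.mem_univ iw))
    have hbound : ∀ j, s j ≤ κ * xt3 j := by
      intro j
      have := hmax j (Finset.mem_univ j)
      rwa [div_le_iff₀ (hxt3 j).1] at this
    have hSdef := Nt i0
    set S := ∑ j, B3 i0 j / d3 i0 * xt3 j with hSd
    have hSpos : 0 < S := by nlinarith [(hxt3 i0).1, h1t i0]
    have h2 : ∑ j, B3 i0 j / d3 i0 * s j ≤ κ * S := by
      rw [hSd, Finset.mul_sum]
      apply Finset.sum_le_sum
      intro j _
      calc B3 i0 j / d3 i0 * s j ≤ B3 i0 j / d3 i0 * (κ * xt3 j) :=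
            mul_le_mul_of_nonneg_left (hbound j) (e3nn i0 j)
        _ = κ * (B3 i0 j / d3 i0 * xt3 j) := by ring
    have h1 := key i0
    have heq0 : s i0 = κ * xt3 i0 := (div_mul_cancel₀ _ (hxt3 i0).1.ne').symm
    have hfin : s i0 ≤ (1 - s i0) * (κ * S) :=
      h1.trans (mul_le_mul_of_nonneg_left h2 (h1s i0).le)
    -- contradiction: κ t ≤ (1 - κ t) κ S while t = (1 - t) S and κ > 1
    nlinarith [hfin, heq0, hSdef, (hxt3 i0).1, hSpos, mul_pos (show (0:ℝ) < κ by linarith) hSpos,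
      mul_pos (hxt3 i0).1 (show (0:ℝ) < κ - 1 by linarith)]
  -- Step A' : equality at the argmin of x3 / xt3
  obtain ⟨i1, -, hmin⟩ := Finset.exists_min_image Finset.univ (fun i => x3 i / xt3 i)
    ⟨⟨0, hn⟩, Finset.mem_univ _⟩
  set μ := x3 i1 / xt3 i1 with hμdef
  have hμpos : 0 < μ := div_pos (hx3 i1).1 (hxt3 i1).1
  have hlow : ∀ j, μ * xt3 j ≤ x3 j := by
    intro j
    have := hmin j (Finset.mem_univ j)
    rwa [le_div_iff₀ (hxt3 j).1] at this
  have heq1 : s i1 = xt3 i1 := by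
    refine le_antisymm (hA i1) ?_
    by_contra hcon
    push_neg at hcon
    have hSdef := Nt i1
    set S := ∑ j, B3 i1 j / d3 i1 * xt3 j with hSd
    have hSpos : 0 < S := by nlinarith [(hxt3 i1).1, h1t i1]
    have h2 : μ * S ≤ ∑ j, B3 i1 j / d3 i1 * x3 j := by
      rw [hSd, Finset.mul_sum]
      apply Finset.sum_le_sum
      intro j _
      calc μ * (B3 i1 j / d3 i1 * xt3 j) = B3 i1 j / d3 i1 * (μ * xt3 j) := by ring
        _ ≤ B3 i1 j / d3 i1 * x3 j := mul_le_mul_of_nonneg_left (hlow j) (e3nn i1 j)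
    have heqx : x3 i1 = μ * xt3 i1 := (div_mul_cancel₀ _ (hxt3 i1).1.ne').symm
    have h3 : (1 - s i1) * (μ * S) ≤ x3 i1 := by
      rw [N3 i1]
      exact mul_le_mul_of_nonneg_left h2 (h1s i1).le
    nlinarith [mul_pos hμpos hSpos, hSdef]
  -- Step B : s = xt3 everywhere
  have hzero : ∀ i, xt3 i - s i = 0 → ∀ j, 0 < B3 i j → xt3 j - s j = 0 := by
    intro i hi j hj
    have hsieq : s i = xt3 i := by linarith
    have hle : ∑ j, B3 i j / d3 i * s j ≤ ∑ j, B3 i j / d3 i * xt3 j :=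
      Finset.sum_le_sum fun j _ => mul_le_mul_of_nonneg_left (hA j) (e3nn i j)
    have hge : ∑ j, B3 i j / d3 i * xt3 j ≤ ∑ j, B3 i j / d3 i * s j := by
      have hk := key i
      have hnt := Nt i
      rw [hsieq] at hk
      by_contra hcc
      push_neg at hcc
      have := mul_lt_mul_of_pos_left hcc (h1t i)
      linarith
    have hsumeq : ∑ j, B3 i j / d3 i * (xt3 j - s j) = 0 := by
      rw [Finset.sum_congr rfl (fun j _ => mul_sub (B3 i j / d3 i) (xt3 j) (s j)),
        Finset.sum_sub_distrib]
      linarith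
    have hterm := (Finset.sum_eq_zero_iff_of_nonneg
      (fun j _ => mul_nonneg (e3nn i j) (by linarith [hA j]))).mp hsumeq j (Finset.mem_univ j)
    have hpos : 0 < B3 i j / d3 i := div_pos hj (hd3 i)
    rcases mul_eq_zero.mp hterm with h | h
    · exact absurd h hpos.ne'
    · exact h
  have hall : ∀ j, s j = xt3 j := by
    intro j
    obtain ⟨k, hk⟩ := hB3.2 i1 j
    have := propagate hB3.1 hzero k i1 j (by linarith) hk
    linarith
  -- Step C : virus-2 rates must equal virus-3 rates
  have hC : ∀ i j, B3 i j / d3 i = B2 i j / d2 i := by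
    have hrow : ∀ i, ∑ j, B2 i j / d2 i * x2 j = ∑ j, B3 i j / d3 i * x2 j := by
      intro i
      have hsum : s i = (1 - s i) * ∑ j, B3 i j / d3 i * s j := by
        have hss : ∑ j, B3 i j / d3 i * s j = ∑ j, B3 i j / d3 i * xt3 j :=
          Finset.sum_congr rfl fun j _ => by rw [hall j]
        rw [hall i, hss]
        exact Nt i
      rw [sumsplit i] at hsum
      have hL : (1 - s i) * ((∑ j, B1 i j / d1 i * x1 j) + (∑ j, B2 i j / d2 i * x2 j) +
          (∑ j, B3 i j / d3 i * x3 j)) = (1 - s i) * ((∑ j, B3 i j / d3 i * x1 j) +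
          (∑ j, B3 i j / d3 i * x2 j) + (∑ j, B3 i j / d3 i * x3 j)) := by
        have e1 : (1 - s i) * ((∑ j, B1 i j / d1 i * x1 j) + (∑ j, B2 i j / d2 i * x2 j) +
            (∑ j, B3 i j / d3 i * x3 j)) = (1 - s i) * (∑ j, B1 i j / d1 i * x1 j) +
            (1 - s i) * (∑ j, B2 i j / d2 i * x2 j) +
            (1 - s i) * (∑ j, B3 i j / d3 i * x3 j) := by ring
        linarith [N1 i, N2 i, N3 i, sdef i, hsum, e1]
      have hcancel := mul_left_cancel₀ (h1s i).ne' hL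
      have := T1 i
      have := T2 i
      linarith
    intro i j
    have hsz : ∑ j, (B3 i j / d3 i - B2 i j / d2 i) * x2 j = 0 := by
      rw [Finset.sum_congr rfl (fun j _ => sub_mul (B3 i j / d3 i) (B2 i j / d2 i) (x2 j)),
        Finset.sum_sub_distrib]
      linarith [hrow i]
    have hterm := (Finset.sum_eq_zero_iff_of_nonneg
      (fun j _ => mul_nonneg (by linarith [m32 i j]) (hx2 j).1.le)).mp hsz j (Finset.mem_univ j)
    rcases mul_eq_zero.mp hterm with h | h
    · linarith
    · exact absurd h (hx2 j).1.ne'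
  -- contradiction with strictness of MatGt
  apply hlt32.2
  ext i j
  rw [inv_diag_mul d3 hd3, inv_diag_mul d2 hd2]
  exact hC i j
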